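/- The broadside channel gain g(B) = (1/(2π)) · ( B/(3(B+1)√(2B+1)) + (2/3)·arctan(B/√(2B+1)) ) is strictly increasing in B for B > 0. -/

import Mathlib

open Real

noncomputable def g (B : ℝ) : ℝ :=
  (1 / (2 * π)) * (B / (3 * (B + 1) * Real.sqrt (2 * B + 1)) +
    (2 / 3) * Real.arctan (B / Real.sqrt (2 * B + 1)))

lemma g_hasDeriv (x : ℝ) (hx : 0 < x) :
    HasDerivAt g ((1 / (2 * π)) * ((3 * x ^ 2 + 7 * x + 3) /
      (3 * (x + 1) ^ 2 * ((2 * x + 1) * Real.sqrt (2 * x + 1))))) x := by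
  have h2x : (0 : ℝ) < 2 * x + 1 := by linarith
  set s := Real.sqrt (2 * x + 1) with hsdef
  have hs0 : 0 < s := Real.sqrt_pos.mpr h2x
  have hs2 : s ^ 2 = 2 * x + 1 := Real.sq_sqrt h2x.le
  have hx1 : (0 : ℝ) < x + 1 := by linarith
  have hlin : HasDerivAt (fun B : ℝ => 2 * B + 1) 2 x := by
    simpa using ((hasDerivAt_id x).const_mul 2).add_const 1
  have hsq : HasDerivAt (fun B : ℝ => Real.sqrt (2 * B + 1)) (2 / (2 * s)) x :=
    hlin.sqrt (ne_of_gt h2x)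
  have hc : HasDerivAt (fun B : ℝ => 3 * (B + 1)) 3 x := by
    simpa using ((hasDerivAt_id x).add_const 1).const_mul 3
  have hden : HasDerivAt (fun B : ℝ => 3 * (B + 1) * Real.sqrt (2 * B + 1))
      (3 * s + 3 * (x + 1) * (2 / (2 * s))) x := hc.mul hsq
  have hdne : 3 * (x + 1) * s ≠ 0 := by positivity
  have hfrac : HasDerivAt (fun B : ℝ => B / (3 * (B + 1) * Real.sqrt (2 * B + 1)))
      ((1 * (3 * (x + 1) * s) - x * (3 * s + 3 * (x + 1) * (2 / (2 * s)))) /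
        (3 * (x + 1) * s) ^ 2) x := (hasDerivAt_id x).div hden hdne
  have hw : HasDerivAt (fun B : ℝ => B / Real.sqrt (2 * B + 1))
      ((1 * s - x * (2 / (2 * s))) / s ^ 2) x := (hasDerivAt_id x).div hsq hs0.ne'
  have harc : HasDerivAt (fun B : ℝ => Real.arctan (B / Real.sqrt (2 * B + 1)))
      (1 / (1 + (x / s) ^ 2) * ((1 * s - x * (2 / (2 * s))) / s ^ 2)) x := hw.arctan
  have hsum := (hfrac.add (harc.const_mul (2 / 3))).const_mul (1 / (2 * π))
  refine hsum.congr_deriv ?_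
  have hxs : x = (s ^ 2 - 1) / 2 := by linarith
  have hs1 : s ^ 2 + 1 ≠ 0 := by positivity
  have hs1' : s ^ 2 + 1 > 0 := by positivity
  have hpi : π ≠ 0 := Real.pi_ne_zero
  rw [hxs]
  rw [show (1 : ℝ) + ((s ^ 2 - 1) / 2 / s) ^ 2 = (s ^ 2 + 1) ^ 2 / (4 * s ^ 2) from by
    field_simp; ring]
  have h3 : s ^ 2 - 1 + 2 ≠ 0 := by
    rw [show s ^ 2 - 1 + 2 = s ^ 2 + 1 from by ring]; exact hs1
  field_simp [h3]
  ring

theorem broadside_gain_strictMono : StrictMonoOn g (Set.Ioi (0 : ℝ)) := by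
  have hπ : (0 : ℝ) < π := Real.pi_pos
  apply strictMonoOn_of_deriv_pos (convex_Ioi 0)
  · intro x hx
    exact ((g_hasDeriv x hx).continuousAt).continuousWithinAt
  · intro x hx
    rw [interior_Ioi] at hx
    rw [(g_hasDeriv x hx).deriv]
    have h2x : (0 : ℝ) < 2 * x + 1 := by linarith [Set.mem_Ioi.mp hx]
    have hx' : 0 < x := hx
    have : (0:ℝ) < Real.sqrt (2*x+1) := Real.sqrt_pos.mpr h2x
    positivity
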